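/- arXiv:2503.16209 — 3 statements merged into one kernel-verified Lean document; each statement's English description precedes it below -/
import Mathlib

section
/- Let A ∈ ℂ^{m×N} and n ∈ ℕ with 2n ≤ N. If A satisfies the restricted isometry property of order 2n with constant δ := δ_{2n} < 1/3, then A satisfies the ℓ_2-robust null space property of order n with constants ρ = δ/(1−2δ) ∈ (0,1) and τ = √(1+δ)/(1−2δ) > 0; that is, for every v ∈ ℂ^N and every S ⊆ {1,…,N} with |S| ≤ n one has ‖v_S‖_{ℓ_2} ≤ ρ n^{−1/2} ‖v_{S^c}‖_{ℓ_1} + τ ‖Av‖_{ℓ_2}. -/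
open scoped BigOperators
open scoped Classical

/-- The `ℓ_p` norm of a finite complex vector. -/
noncomputable def lpNorm {ι : Type*} [Fintype ι] (p : ℝ) (v : ι → ℂ) : ℝ :=
  (∑ i, ‖v i‖ ^ p) ^ (1 / p)

/-- Number of nonzero entries of a vector. -/
noncomputable def sparsity {ι : Type*} [Fintype ι] (v : ι → ℂ) : ℕ :=
  (Finset.univ.filter fun i => v i ≠ 0).card

/-- `A` satisfies the restricted isometry property of order `n` with constant `δ`. -/
def HasRIP {m : ℕ} {ι : Type*} [Fintype ι] (A : Matrix (Fin m) ι ℂ) (n : ℕ) (δ : ℝ) : Prop :=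
  ∀ v : ι → ℂ, sparsity v ≤ n →
    (1 - δ) * lpNorm 2 v ^ 2 ≤ lpNorm 2 (A.mulVec v) ^ 2 ∧
      lpNorm 2 (A.mulVec v) ^ 2 ≤ (1 + δ) * lpNorm 2 v ^ 2

/-- `A` satisfies the `ℓ₂`-robust null space property of order `n`
with constants `ρ` and `τ`. -/
def HasNSP {m : ℕ} {ι : Type*} [Fintype ι] (A : Matrix (Fin m) ι ℂ) (n : ℕ) (ρ τ : ℝ) : Prop :=
  ∀ (v : ι → ℂ) (S : Finset ι), S.card ≤ n →
    lpNorm 2 (fun i => if i ∈ S then v i else 0) ≤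
      ρ * (n : ℝ) ^ (-(1 : ℝ) / 2) * lpNorm 1 (fun i => if i ∈ S then 0 else v i) +
        τ * lpNorm 2 (A.mulVec v)

/-! ### Auxiliary material -/

noncomputable def toE {ι : Type*} [Fintype ι] (u : ι → ℂ) : EuclideanSpace ℂ ι :=
  (WithLp.equiv 2 (ι → ℂ)).symm u

lemma toE_apply {ι : Type*} [Fintype ι] (u : ι → ℂ) (i : ι) : toE u i = u i := rfl

lemma toE_add {ι : Type*} [Fintype ι] (u w : ι → ℂ) : toE (u + w) = toE u + toE w := rfl

lemma rpow_two' (x : ℝ) : x ^ (2:ℝ) = x ^ (2:ℕ) := by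
  rw [← Real.rpow_natCast x 2]; norm_num

lemma lpNorm_two_eq {ι : Type*} [Fintype ι] (u : ι → ℂ) : lpNorm 2 u = ‖toE u‖ := by
  have h : (∑ i, ‖u i‖ ^ (2:ℝ)) = ∑ i, ‖toE u i‖ ^ (2:ℕ) :=
    Finset.sum_congr rfl fun i _ => rpow_two' _
  rw [lpNorm, EuclideanSpace.norm_eq, Real.sqrt_eq_rpow, h]

lemma lpNorm_one_eq {ι : Type*} [Fintype ι] (u : ι → ℂ) : lpNorm 1 u = ∑ i, ‖u i‖ := by
  rw [lpNorm]; norm_num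

lemma lpNorm_two_nonneg {ι : Type*} [Fintype ι] (u : ι → ℂ) : 0 ≤ lpNorm 2 u := by
  rw [lpNorm_two_eq]; positivity

lemma toE_sum {ι : Type*} [Fintype ι] {κ : Type*} (s : Finset κ) (f : κ → ι → ℂ) :
    toE (∑ k ∈ s, f k) = ∑ k ∈ s, toE (f k) := by
  classical
  induction s using Finset.induction with
  | empty => rfl
  | insert _ _ h ih => rw [Finset.sum_insert h, Finset.sum_insert h, toE_add, ih]

/-! ### Sum domination lemmas -/

lemma sum_le_sum_of_dom {ι : Type*} (h : ι → ℝ) (hh : ∀ i, 0 ≤ h i)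
    (B' B : Finset ι) (hcard : B'.card ≤ B.card)
    (hdom : ∀ i ∈ B', ∀ j ∈ B, h i ≤ h j) :
    ∑ i ∈ B', h i ≤ ∑ j ∈ B, h j := by
  rcases B'.eq_empty_or_nonempty with rfl | hne
  · exact Finset.sum_nonneg fun j _ => hh j
  · have hBne : B.Nonempty := by
      rw [← Finset.card_pos]
      exact lt_of_lt_of_le (Finset.card_pos.mpr hne) hcard
    obtain ⟨j₀, hj₀B, hj₀min⟩ := Finset.exists_min_image B h hBne
    calc ∑ i ∈ B', h i ≤ B'.card • h j₀ :=
          Finset.sum_le_card_nsmul _ _ _ fun i hi => hdom i hi j₀ hj₀B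
      _ ≤ B.card • h j₀ := by
          rw [nsmul_eq_mul, nsmul_eq_mul]
          exact mul_le_mul_of_nonneg_right (by exact_mod_cast hcard) (hh j₀)
      _ ≤ ∑ j ∈ B, h j := Finset.card_nsmul_le_sum _ _ _ fun j hj => hj₀min j hj

lemma dom_sum_le {ι : Type*} (g : ι → ℝ) (hg : ∀ i, 0 ≤ g i) (S T : Finset ι)
    (hcard : S.card ≤ T.card) (hdom : ∀ i ∉ T, ∀ j ∈ T, g i ≤ g j) :
    ∑ i ∈ S, g i ≤ ∑ i ∈ T, g i := by
  have h1 : (S \ T).card ≤ (T \ S).card := by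
    have e1 := Finset.card_sdiff_add_card_inter S T
    have e2 := Finset.card_sdiff_add_card_inter T S
    rw [Finset.inter_comm] at e2
    omega
  have h2 : ∑ i ∈ S \ T, g i ≤ ∑ i ∈ T \ S, g i :=
    sum_le_sum_of_dom g hg _ _ h1 fun i hi j hj =>
      hdom i (Finset.mem_sdiff.mp hi).2 j (Finset.mem_sdiff.mp hj).1
  have e1 := Finset.sum_inter_add_sum_sdiff S T g
  have e2 := Finset.sum_inter_add_sum_sdiff T S g
  rw [Finset.inter_comm] at e2
  linarith

lemma block_sq_le {ι : Type*} (g : ι → ℝ) (hg : ∀ i, 0 ≤ g i) (B' B : Finset ι) (n : ℕ)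
    (hB' : B'.card ≤ n) (hB : B.card = n)
    (hdom : ∀ i ∈ B', ∀ j ∈ B, g i ≤ g j) :
    (∑ i ∈ B', g i ^ 2) * n ≤ (∑ j ∈ B, g j) ^ 2 := by
  rcases Nat.eq_zero_or_pos n with rfl | hn
  · have : B' = ∅ := Finset.card_eq_zero.mp (le_antisymm hB' (Nat.zero_le _))
    simp [this]
    positivity
  · have hBne : B.Nonempty := Finset.card_pos.mp (hB ▸ hn)
    obtain ⟨j₀, hj₀B, hj₀min⟩ := Finset.exists_min_image B g hBne
    have h1 : ∑ i ∈ B', g i ^ 2 ≤ n * g j₀ ^ 2 := by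
      calc ∑ i ∈ B', g i ^ 2 ≤ B'.card • (g j₀ ^ 2) :=
            Finset.sum_le_card_nsmul _ _ _ fun i hi =>
              pow_le_pow_left₀ (hg i) (hdom i hi j₀ hj₀B) 2
        _ ≤ (n:ℝ) * g j₀ ^ 2 := by
            rw [nsmul_eq_mul]
            exact mul_le_mul_of_nonneg_right (by exact_mod_cast hB') (by positivity)
    have h2 : (n:ℝ) * g j₀ ≤ ∑ j ∈ B, g j := by
      have := Finset.card_nsmul_le_sum B g (g j₀) fun j hj => hj₀min j hj
      rwa [nsmul_eq_mul, hB] at this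
    have h3 : ((n:ℝ) * g j₀) ^ 2 ≤ (∑ j ∈ B, g j) ^ 2 :=
      pow_le_pow_left₀ (mul_nonneg (Nat.cast_nonneg n) (hg j₀)) h2 2
    calc (∑ i ∈ B', g i ^ 2) * n ≤ (n * g j₀ ^ 2) * n :=
          mul_le_mul_of_nonneg_right h1 (by positivity)
      _ = ((n:ℝ) * g j₀) ^ 2 := by ring
      _ ≤ _ := h3

/-! ### Polarization -/

section Polar
variable {m N : ℕ} (A : Matrix (Fin m) (Fin N) ℂ)

lemma sparsity_add_le (u w : Fin N → ℂ) :
    sparsity (u + w) ≤ sparsity u + sparsity w := by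
  classical
  refine le_trans (Finset.card_le_card ?_) (Finset.card_union_le _ _)
  intro i hi
  simp only [Finset.mem_filter, Finset.mem_union, Finset.mem_univ, true_and, Pi.add_apply] at *
  by_contra h
  push_neg at h
  exact hi (by rw [h.1, h.2, add_zero])

lemma sparsity_sub_le (u w : Fin N → ℂ) :
    sparsity (u - w) ≤ sparsity u + sparsity w := by
  classical
  refine le_trans (Finset.card_le_card ?_) (Finset.card_union_le _ _)
  intro i hi
  simp only [Finset.mem_filter, Finset.mem_union, Finset.mem_univ, true_and, Pi.sub_apply] at *
  by_contra h
  push_neg at h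
  exact hi (by rw [h.1, h.2, sub_zero])

lemma sparsity_smul_le (c : ℂ) (u : Fin N → ℂ) : sparsity (c • u) ≤ sparsity u := by
  classical
  apply Finset.card_le_card
  intro i hi
  simp only [Finset.mem_filter, Finset.mem_univ, true_and, Pi.smul_apply, smul_eq_mul] at *
  exact fun h => hi (by rw [h, mul_zero])

lemma inner_toE_zero_of_disj (u w : Fin N → ℂ) (hdisj : ∀ i, u i = 0 ∨ w i = 0) :
    inner (𝕜 := ℂ) (toE u) (toE w) = 0 := by
  rw [PiLp.inner_apply]
  refine Finset.sum_eq_zero fun i _ => ?_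
  have hu : toE u i = u i := rfl
  have hw : toE w i = w i := rfl
  rcases hdisj i with h | h <;>
    simp [RCLike.inner_apply, hu, hw, h]

lemma norm_toE_add_sq (u w : Fin N → ℂ) (hdisj : ∀ i, u i = 0 ∨ w i = 0) :
    ‖toE (u + w)‖ ^ 2 = ‖toE u‖ ^ 2 + ‖toE w‖ ^ 2 := by
  have h0 := inner_toE_zero_of_disj u w hdisj
  have : toE (u + w) = toE u + toE w := rfl
  rw [this, norm_add_sq (𝕜 := ℂ), h0]
  simp

lemma norm_toE_sub_sq (u w : Fin N → ℂ) (hdisj : ∀ i, u i = 0 ∨ w i = 0) :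
    ‖toE (u - w)‖ ^ 2 = ‖toE u‖ ^ 2 + ‖toE w‖ ^ 2 := by
  have h0 := inner_toE_zero_of_disj u w hdisj
  have : toE (u - w) = toE u - toE w := rfl
  rw [this, norm_sub_sq (𝕜 := ℂ), h0]
  simp

variable {n : ℕ} {δ : ℝ}

lemma polar_aux (hRIP : HasRIP A (2*n) δ) (u w : Fin N → ℂ)
    (hsp : sparsity u + sparsity w ≤ 2*n) (hdisj : ∀ i, u i = 0 ∨ w i = 0) :
    |RCLike.re (inner (𝕜 := ℂ) (toE (A.mulVec u)) (toE (A.mulVec w)))| ≤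
      δ * (‖toE u‖ ^ 2 + ‖toE w‖ ^ 2) / 2 := by
  have hadd := hRIP (u + w) (le_trans (sparsity_add_le u w) hsp)
  have hsub := hRIP (u - w) (le_trans (sparsity_sub_le u w) hsp)
  rw [lpNorm_two_eq, lpNorm_two_eq, Matrix.mulVec_add] at hadd
  rw [lpNorm_two_eq, lpNorm_two_eq, Matrix.mulVec_sub] at hsub
  rw [norm_toE_add_sq u w hdisj] at hadd
  rw [norm_toE_sub_sq u w hdisj] at hsub
  have e1 : toE (A.mulVec u + A.mulVec w) = toE (A.mulVec u) + toE (A.mulVec w) := rfl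
  have e2 : toE (A.mulVec u - A.mulVec w) = toE (A.mulVec u) - toE (A.mulVec w) := rfl
  rw [e1] at hadd; rw [e2] at hsub
  have hpa := norm_add_sq (𝕜 := ℂ) (toE (A.mulVec u)) (toE (A.mulVec w))
  have hps := norm_sub_sq (𝕜 := ℂ) (toE (A.mulVec u)) (toE (A.mulVec w))
  rw [abs_le]
  constructor <;> nlinarith [hadd.1, hadd.2, hsub.1, hsub.2]

lemma polar (hRIP : HasRIP A (2*n) δ) (u w : Fin N → ℂ)
    (hsp : sparsity u + sparsity w ≤ 2*n) (hdisj : ∀ i, u i = 0 ∨ w i = 0) :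
    |RCLike.re (inner (𝕜 := ℂ) (toE (A.mulVec u)) (toE (A.mulVec w)))| ≤
      δ * ‖toE u‖ * ‖toE w‖ := by
  set r := ‖toE w‖ with hr
  set s := ‖toE u‖ with hs
  have hrnn : 0 ≤ r := norm_nonneg _
  have hsnn : 0 ≤ s := norm_nonneg _
  rcases eq_or_lt_of_le hsnn with h0 | hspos
  · have htu : toE u = 0 := by rw [← norm_eq_zero, ← hs, ← h0]
    have hu : u = 0 := funext fun i => by simpa [toE_apply] using congrArg (fun x => x i) htu
    have : A.mulVec u = 0 := by rw [hu, Matrix.mulVec_zero]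
    have hz : toE (A.mulVec u) = 0 := by rw [this]; rfl
    rw [hz, inner_zero_left]
    simp [← h0]
  rcases eq_or_lt_of_le hrnn with h0 | hrpos
  · have htw : toE w = 0 := by rw [← norm_eq_zero, ← hr, ← h0]
    have hw : w = 0 := funext fun i => by simpa [toE_apply] using congrArg (fun x => x i) htw
    have : A.mulVec w = 0 := by rw [hw, Matrix.mulVec_zero]
    have hz : toE (A.mulVec w) = 0 := by rw [this]; rfl
    rw [hz, inner_zero_right]
    simp [← h0]
  · have key := polar_aux A hRIP ((r:ℂ) • u) ((s:ℂ) • w)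
      (le_trans (Nat.add_le_add (sparsity_smul_le _ u) (sparsity_smul_le _ w)) hsp)
      (fun i => by rcases hdisj i with h | h <;> simp [h])
    have eu : toE ((r:ℂ) • u) = (r:ℂ) • toE u := rfl
    have ew : toE ((s:ℂ) • w) = (s:ℂ) • toE w := rfl
    have hnu : ‖toE ((r:ℂ) • u)‖ = r * s := by
      rw [eu, norm_smul, Complex.norm_real, Real.norm_eq_abs, abs_of_nonneg hrnn, ← hs]
    have hnw : ‖toE ((s:ℂ) • w)‖ = s * r := by
      rw [ew, norm_smul, Complex.norm_real, Real.norm_eq_abs, abs_of_nonneg hsnn, ← hr]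
    have ebu : A.mulVec ((r:ℂ) • u) = (r:ℂ) • A.mulVec u := Matrix.mulVec_smul A _ u
    have ebw : A.mulVec ((s:ℂ) • w) = (s:ℂ) • A.mulVec w := Matrix.mulVec_smul A _ w
    have einner : inner (𝕜 := ℂ) (toE (A.mulVec ((r:ℂ) • u))) (toE (A.mulVec ((s:ℂ) • w)))
        = ((r*s : ℝ) : ℂ) * inner (𝕜 := ℂ) (toE (A.mulVec u)) (toE (A.mulVec w)) := by
      rw [ebu, ebw]
      have e1 : toE ((r:ℂ) • A.mulVec u) = (r:ℂ) • toE (A.mulVec u) := rfl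
      have e2 : toE ((s:ℂ) • A.mulVec w) = (s:ℂ) • toE (A.mulVec w) := rfl
      rw [e1, e2, inner_smul_left, inner_smul_right]
      push_cast
      ring_nf
      rw [Complex.conj_ofReal]
      ring
    rw [einner, hnu, hnw] at key
    set X := RCLike.re (inner (𝕜 := ℂ) (toE (A.mulVec u)) (toE (A.mulVec w))) with hX
    have hre : RCLike.re (((r*s : ℝ) : ℂ) * inner (𝕜 := ℂ) (toE (A.mulVec u)) (toE (A.mulVec w)))
        = (r*s) * X := by
      simp [hX, RCLike.re_to_complex, Complex.re_ofReal_mul]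
    rw [hre, abs_mul, abs_of_nonneg (by positivity : (0:ℝ) ≤ r*s)] at key
    have hrs : 0 < r * s := mul_pos hrpos hspos
    have : |X| ≤ δ * (r * s) := by
      have h2 : (r*s) * |X| ≤ (r*s) * (δ * (r*s)) := by nlinarith [key]
      exact le_of_mul_le_mul_left h2 hrs
    calc |X| ≤ δ * (r*s) := this
      _ = δ * s * r := by ring

end Polar

set_option maxHeartbeats 1000000 in
/-- **RIP implies ℓ₂-robust NSP.**  If `A ∈ ℂ^{m×N}` satisfies the RIP of order `2n`
with constant `δ < 1/3`, then `A` satisfies the `ℓ₂`-robust NSP of order `n`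
with constants `ρ = δ/(1−2δ) ∈ (0,1)` and `τ = √(1+δ)/(1−2δ) > 0`. -/
theorem stmt0 {m N n : ℕ} (hn : 2 * n ≤ N) (A : Matrix (Fin m) (Fin N) ℂ)
    (δ : ℝ) (hδ0 : 0 < δ) (hδ : δ < 1 / 3) (hRIP : HasRIP A (2 * n) δ) :
    δ / (1 - 2 * δ) ∈ Set.Ioo (0 : ℝ) 1 ∧ 0 < Real.sqrt (1 + δ) / (1 - 2 * δ) ∧
      HasNSP A n (δ / (1 - 2 * δ)) (Real.sqrt (1 + δ) / (1 - 2 * δ)) := by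
  have hc : 0 < 1 - 2*δ := by linarith
  refine ⟨⟨by positivity, by rw [div_lt_one hc]; linarith⟩,
    div_pos (Real.sqrt_pos.mpr (by linarith)) hc, ?_⟩
  intro v S hS
  rcases Nat.eq_zero_or_pos n with rfl | hn1
  · -- trivial case n = 0
    have hS0 : S = ∅ := Finset.card_eq_zero.mp (le_antisymm hS (Nat.zero_le _))
    subst hS0
    have hL : lpNorm 2 (fun i : Fin N => if i ∈ (∅ : Finset (Fin N)) then v i else 0) = 0 := by
      rw [lpNorm_two_eq]
      have : toE (fun i : Fin N => if i ∈ (∅ : Finset (Fin N)) then v i else 0)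
          = (0 : EuclideanSpace ℂ (Fin N)) := by
        ext i; simp [toE_apply]
      rw [this, norm_zero]
    refine le_trans (b := 0) (le_of_eq (by convert hL using 3; simp)) ?_
    have h1 : ((0:ℕ) : ℝ) ^ (-(1:ℝ)/2) = 0 := by
      rw [Nat.cast_zero, Real.zero_rpow (by norm_num)]
    rw [h1]
    have := lpNorm_two_nonneg (A.mulVec v)
    have hτ : (0:ℝ) ≤ Real.sqrt (1 + δ) / (1 - 2 * δ) :=
      le_of_lt (div_pos (Real.sqrt_pos.mpr (by linarith)) hc)
    nlinarith [this, hτ]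
  · -- main case: n ≥ 1
    have hnN : n ≤ N := le_trans (by omega) hn
    have hNpos : 0 < N := by omega
    have h2N : 1 < N := by omega
    set g : Fin N → ℝ := fun i => ‖v i‖ with hg
    have hg0 : ∀ i, 0 ≤ g i := fun i => norm_nonneg _
    set σ : Equiv.Perm (Fin N) := Tuple.sort (fun i => -g i) with hσ
    have hmono : ∀ a b : Fin N, a ≤ b → g (σ b) ≤ g (σ a) := by
      intro a b hab
      have h := Tuple.monotone_sort (fun i => -g i) hab
      simp only [Function.comp_apply] at h
      rw [← hσ] at h
      linarith [h]
    set Sk : ℕ → Finset (Fin N) :=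
      fun k => Finset.univ.filter
        (fun i => k*n ≤ (σ.symm i : ℕ) ∧ (σ.symm i : ℕ) < (k+1)*n) with hSkdef
    have hmem : ∀ (k : ℕ) (i : Fin N),
        i ∈ Sk k ↔ (k*n ≤ (σ.symm i:ℕ) ∧ (σ.symm i:ℕ) < (k+1)*n) := by
      intro k i; rw [hSkdef]; simp
    have hdomkk : ∀ k k' : ℕ, k < k' → ∀ i ∈ Sk k', ∀ j ∈ Sk k, g i ≤ g j := by
      intro k k' hkk i hi j hj
      rw [hmem] at hi hj
      have h1 : (k+1) * n ≤ k' * n := Nat.mul_le_mul_right n hkk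
      have hle : σ.symm j ≤ σ.symm i := by
        rw [Fin.le_def]; omega
      have := hmono _ _ hle
      simpa using this
    have hdomT : ∀ i ∉ Sk 0, ∀ j ∈ Sk 0, g i ≤ g j := by
      intro i hi j hj
      rw [hmem] at hj
      have hge : ¬ ((σ.symm i:ℕ) < (0+1)*n) := fun hlt =>
        hi ((hmem 0 i).mpr ⟨by omega, hlt⟩)
      have hle : σ.symm j ≤ σ.symm i := by rw [Fin.le_def]; omega
      simpa using hmono _ _ hle
    have hcard : ∀ k : ℕ, (Sk k).card = min ((k+1)*n) N - k*n := by
      intro k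
      have hbij : (Sk k).card
          = ((Finset.range N).filter (fun j => k*n ≤ j ∧ j < (k+1)*n)).card := by
        refine Finset.card_bij (fun i _ => ((σ.symm i : Fin N) : ℕ)) ?_ ?_ ?_
        · intro a ha
          rw [hmem] at ha
          simp only [Finset.mem_filter, Finset.mem_range]
          exact ⟨(σ.symm a).isLt, ha⟩
        · intro a _ b _ hab
          exact σ.symm.injective (Fin.ext hab)
        · intro b hb
          simp only [Finset.mem_filter, Finset.mem_range] at hb
          refine ⟨σ ⟨b, hb.1⟩, ?_, ?_⟩
          · rw [hmem]
            simpa using hb.2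
          · simp
      rw [hbij]
      have he : (Finset.range N).filter (fun j => k*n ≤ j ∧ j < (k+1)*n)
          = Finset.Ico (k*n) (min ((k+1)*n) N) := by
        ext j
        simp only [Finset.mem_filter, Finset.mem_range, Finset.mem_Ico]
        omega
      rw [he, Nat.card_Ico]
    have card0 : (Sk 0).card = n := by
      rw [hcard]
      simp
      omega
    have cardle : ∀ k, (Sk k).card ≤ n := by
      intro k
      rw [hcard k, add_mul, one_mul]
      omega
    have cardfull : ∀ k, (Sk (k+1)).Nonempty → (Sk k).card = n := by
      intro k hne
      have h1 : 0 < (Sk (k+1)).card := Finset.card_pos.mpr hne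
      rw [hcard] at h1
      rw [hcard]
      have e1 : (k+1+1)*n = k*n + n + n := by ring
      have e2 : (k+1)*n = k*n + n := by ring
      rw [e1, e2] at h1
      rw [e2]
      omega
    have hk0mem : ∀ i : Fin N, i ∈ Sk ((σ.symm i : ℕ)/n) := by
      intro i
      rw [hmem]
      refine ⟨Nat.div_mul_le_self _ n, ?_⟩
      rw [add_mul, one_mul]
      have h := Nat.div_add_mod' (σ.symm i : ℕ) n
      have h2 : (σ.symm i : ℕ) % n < n := Nat.mod_lt _ hn1
      omega
    have hk0lt : ∀ i : Fin N, (σ.symm i : ℕ)/n ∈ Finset.range N := by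
      intro i
      rw [Finset.mem_range]
      exact lt_of_le_of_lt (Nat.div_le_self _ n) (σ.symm i).isLt
    have hk0uniq : ∀ (i : Fin N) (k : ℕ), i ∈ Sk k → k = (σ.symm i:ℕ)/n := by
      intro i k hk
      rw [hmem] at hk
      exact (Nat.div_eq_of_lt_le hk.1 hk.2).symm
    set P : Finset (Fin N) → (Fin N → ℂ) := fun W i => if i ∈ W then v i else 0 with hP
    have hPsp : ∀ W, sparsity (P W) ≤ W.card := by
      intro W
      apply Finset.card_le_card
      intro i hi
      rw [Finset.mem_filter] at hi
      by_contra h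
      exact hi.2 (by rw [hP]; simp [h])
    have hnrm : ∀ W : Finset (Fin N), ‖toE (P W)‖ = Real.sqrt (∑ i ∈ W, g i ^ 2) := by
      intro W
      rw [EuclideanSpace.norm_eq]
      congr 1
      have hpt : ∀ i, ‖toE (P W) i‖^2 = if i ∈ W then g i ^2 else 0 := by
        intro i
        have he : toE (P W) i = P W i := rfl
        rw [he, hP]
        by_cases h : i ∈ W <;> simp [h, hg]
      rw [Finset.sum_congr rfl fun i _ => hpt i, Finset.sum_ite_mem, Finset.univ_inter]
    have hvsum : A.mulVec v = ∑ k ∈ Finset.range N, A.mulVec (P (Sk k)) := by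
      have hv : v = ∑ k ∈ Finset.range N, P (Sk k) := by
        funext i
        rw [Finset.sum_apply]
        symm
        rw [Finset.sum_eq_single_of_mem ((σ.symm i : ℕ)/n) (hk0lt i)]
        · rw [hP]; simp [hk0mem i]
        · intro k hk hne
          rw [hP]
          simp only
          rw [if_neg]
          intro hmem'
          exact hne (hk0uniq i k hmem')
      calc A.mulVec v = A.mulVec (∑ k ∈ Finset.range N, P (Sk k)) := by rw [← hv]
        _ = ∑ k ∈ Finset.range N, A.mulVec (P (Sk k)) := by
            rw [← Matrix.mulVecLin_apply, map_sum]
            simp [Matrix.mulVecLin_apply]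
    have hpart : ∀ f : Fin N → ℝ, ∑ k ∈ Finset.range N, ∑ i ∈ Sk k, f i = ∑ i, f i := by
      intro f
      have h1 : ∀ k : ℕ, ∑ i ∈ Sk k, f i = ∑ i, if i ∈ Sk k then f i else 0 := by
        intro k
        rw [Finset.sum_ite_mem, Finset.univ_inter]
      simp_rw [h1]
      rw [Finset.sum_comm]
      refine Finset.sum_congr rfl fun i _ => ?_
      rw [Finset.sum_eq_single_of_mem ((σ.symm i:ℕ)/n) (hk0lt i)]
      · rw [if_pos (hk0mem i)]
      · intro k hk hne
        exact if_neg (fun hmem' => hne (hk0uniq i k hmem'))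
    set L := ‖toE (P (Sk 0))‖ with hL
    have hLnn : 0 ≤ L := norm_nonneg _
    set W1 := ∑ i ∈ Finset.univ \ Sk 0, g i with hW1def
    have hW1nn : 0 ≤ W1 := Finset.sum_nonneg fun i _ => hg0 i
    have hnpos : (0:ℝ) < (n:ℝ) := by exact_mod_cast hn1
    have hsqn : (0:ℝ) < Real.sqrt n := Real.sqrt_pos.mpr hnpos
    set bv := toE (A.mulVec v) with hbv
    have hbvnn : 0 ≤ ‖bv‖ := norm_nonneg _
    have E4 : ∀ k ∈ Finset.Ico 2 N,
        ‖toE (P (Sk k))‖ ≤ (∑ i ∈ Sk (k-1), g i) / Real.sqrt n := by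
      intro k hk
      rw [Finset.mem_Ico] at hk
      rcases (Sk k).eq_empty_or_nonempty with he | hne
      · rw [hnrm, he]
        simp only [Finset.sum_empty, Real.sqrt_zero]
        positivity
      · have hk1 : k - 1 + 1 = k := by omega
        have hfull : (Sk (k-1)).card = n := cardfull (k-1) (by rw [hk1]; exact hne)
        have hb := block_sq_le g hg0 (Sk k) (Sk (k-1)) n (cardle k) hfull
          (hdomkk (k-1) k (by omega))
        rw [hnrm, le_div_iff₀ hsqn]
        have hs1 : Real.sqrt (∑ i ∈ Sk k, g i^2) * Real.sqrt (n:ℝ)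
            = Real.sqrt ((∑ i ∈ Sk k, g i^2) * n) := (Real.sqrt_mul (by positivity) _).symm
        rw [hs1]
        calc Real.sqrt ((∑ i ∈ Sk k, g i^2) * n)
            ≤ Real.sqrt ((∑ i ∈ Sk (k-1), g i)^2) := Real.sqrt_le_sqrt hb
          _ = ∑ i ∈ Sk (k-1), g i := Real.sqrt_sq (Finset.sum_nonneg fun i _ => hg0 i)
    have E3 : ‖toE (P (Sk 1))‖ ≤ L := by
      rw [hnrm, hL, hnrm]
      apply Real.sqrt_le_sqrt
      refine sum_le_sum_of_dom (fun i => g i^2) (fun i => sq_nonneg _) _ _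
        (by rw [card0]; exact cardle 1) ?_
      intro i hi j hj
      exact pow_le_pow_left₀ (hg0 i) (hdomkk 0 1 (by omega) i hi j hj) 2
    have hW1eq : ∑ k ∈ Finset.Ico 1 N, ∑ i ∈ Sk k, g i = W1 := by
      have h1 := hpart g
      rw [Finset.range_eq_Ico, Finset.sum_eq_sum_Ico_succ_bot hNpos] at h1
      have h2 := Finset.sum_sdiff (Finset.subset_univ (Sk 0)) (f := g)
      rw [hW1def]
      linarith
    have E5 : ∑ k ∈ Finset.Ico 1 N, ‖toE (P (Sk k))‖ ≤ L + W1 / Real.sqrt n := by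
      rw [Finset.sum_eq_sum_Ico_succ_bot h2N]
      have h6 : ∑ k ∈ Finset.Ico 2 N, ‖toE (P (Sk k))‖
          ≤ ∑ k ∈ Finset.Ico 2 N, (∑ i ∈ Sk (k-1), g i) / Real.sqrt n :=
        Finset.sum_le_sum E4
      have h7 : ∑ k ∈ Finset.Ico 2 N, (∑ i ∈ Sk (k-1), g i) / Real.sqrt n
          ≤ ∑ k ∈ Finset.Ico 1 N, (∑ i ∈ Sk k, g i) / Real.sqrt n := by
        rw [Finset.sum_Ico_eq_sum_range, Finset.sum_Ico_eq_sum_range]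
        have he : ∀ j : ℕ, 2 + j - 1 = 1 + j := by omega
        simp_rw [he]
        refine Finset.sum_le_sum_of_subset_of_nonneg
          (Finset.range_subset_range.mpr (by omega)) ?_
        intro j _ _
        have : 0 ≤ ∑ i ∈ Sk (1+j), g i := Finset.sum_nonneg fun i _ => hg0 i
        positivity
      have h8 : ∑ k ∈ Finset.Ico 1 N, (∑ i ∈ Sk k, g i) / Real.sqrt n
          = W1 / Real.sqrt n := by
        rw [← Finset.sum_div, hW1eq]
      linarith [E3]
    set b0 := toE (A.mulVec (P (Sk 0))) with hb0
    have hbnn : 0 ≤ ‖b0‖ := norm_nonneg _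
    have hdisj0 : ∀ k : ℕ, 1 ≤ k → ∀ i, P (Sk 0) i = 0 ∨ P (Sk k) i = 0 := by
      intro k hk i
      by_cases h0 : i ∈ Sk 0
      · right
        rw [hP]
        simp only
        rw [if_neg]
        intro hik
        rw [hmem] at h0 hik
        have h1 : 1 * n ≤ k * n := Nat.mul_le_mul_right n hk
        omega
      · left; rw [hP]; simp [h0]
    have E2 : ∀ k ∈ Finset.Ico 1 N,
        -(RCLike.re (inner (𝕜 := ℂ) b0 (toE (A.mulVec (P (Sk k))))))
          ≤ δ * L * ‖toE (P (Sk k))‖ := by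
      intro k hk
      rw [Finset.mem_Ico] at hk
      have hsp : sparsity (P (Sk 0)) + sparsity (P (Sk k)) ≤ 2 * n := by
        have h1 := hPsp (Sk 0)
        have h2 := hPsp (Sk k)
        have h3 := cardle k
        rw [card0] at h1
        omega
      have hp := polar A hRIP (P (Sk 0)) (P (Sk k)) hsp (hdisj0 k hk.1)
      rw [hb0]
      calc -(RCLike.re (inner (𝕜 := ℂ) (toE (A.mulVec (P (Sk 0)))) (toE (A.mulVec (P (Sk k))))))
          ≤ |RCLike.re (inner (𝕜 := ℂ) (toE (A.mulVec (P (Sk 0)))) (toE (A.mulVec (P (Sk k)))))| :=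
            neg_le_abs _
        _ ≤ δ * ‖toE (P (Sk 0))‖ * ‖toE (P (Sk k))‖ := hp
        _ = δ * L * ‖toE (P (Sk k))‖ := by rw [← hL]
    have hexp : RCLike.re (inner (𝕜:=ℂ) b0 bv)
        = ‖b0‖^2 + ∑ k ∈ Finset.Ico 1 N,
            RCLike.re (inner (𝕜:=ℂ) b0 (toE (A.mulVec (P (Sk k))))) := by
      rw [hbv, hvsum, toE_sum, inner_sum, map_sum]
      rw [Finset.range_eq_Ico, Finset.sum_eq_sum_Ico_succ_bot hNpos]
      rw [← hb0, inner_self_eq_norm_sq]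
    have hE1 := re_inner_le_norm (𝕜 := ℂ) b0 bv
    have hsumE2 : -(∑ k ∈ Finset.Ico 1 N,
          RCLike.re (inner (𝕜:=ℂ) b0 (toE (A.mulVec (P (Sk k))))))
        ≤ δ * L * (L + W1 / Real.sqrt n) := by
      have h1 : -(∑ k ∈ Finset.Ico 1 N,
            RCLike.re (inner (𝕜:=ℂ) b0 (toE (A.mulVec (P (Sk k))))))
          = ∑ k ∈ Finset.Ico 1 N,
            -(RCLike.re (inner (𝕜:=ℂ) b0 (toE (A.mulVec (P (Sk k)))))) := by
        rw [Finset.sum_neg_distrib]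
      rw [h1]
      calc ∑ k ∈ Finset.Ico 1 N,
            -(RCLike.re (inner (𝕜:=ℂ) b0 (toE (A.mulVec (P (Sk k))))))
          ≤ ∑ k ∈ Finset.Ico 1 N, δ * L * ‖toE (P (Sk k))‖ := Finset.sum_le_sum E2
        _ = δ * L * ∑ k ∈ Finset.Ico 1 N, ‖toE (P (Sk k))‖ := by rw [Finset.mul_sum]
        _ ≤ δ * L * (L + W1 / Real.sqrt n) :=
            mul_le_mul_of_nonneg_left E5 (mul_nonneg hδ0.le hLnn)
    have hsp0 : sparsity (P (Sk 0)) ≤ 2*n := by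
      have h1 := hPsp (Sk 0)
      rw [card0] at h1
      omega
    have hrip0 := hRIP (P (Sk 0)) hsp0
    rw [lpNorm_two_eq, lpNorm_two_eq] at hrip0
    have hlow : (1-δ) * L^2 ≤ ‖b0‖^2 := by rw [hL, hb0]; exact hrip0.1
    have hupp : ‖b0‖ ≤ Real.sqrt (1+δ) * L := by
      have hsq : ‖b0‖^2 ≤ (Real.sqrt (1+δ) * L)^2 := by
        rw [mul_pow, Real.sq_sqrt (by linarith : (0:ℝ) ≤ 1+δ), hb0, hL]
        exact hrip0.2
      calc ‖b0‖ = Real.sqrt (‖b0‖^2) := (Real.sqrt_sq hbnn).symm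
        _ ≤ Real.sqrt ((Real.sqrt (1+δ)*L)^2) := Real.sqrt_le_sqrt hsq
        _ = Real.sqrt (1+δ)*L := Real.sqrt_sq (by positivity)
    have core : (1-2*δ) * L ≤ δ * (W1 / Real.sqrt n) + Real.sqrt (1+δ) * ‖bv‖ := by
      rcases eq_or_lt_of_le hLnn with h0 | hLpos
      · rw [← h0, mul_zero]
        have h1 : 0 ≤ δ * (W1 / Real.sqrt n) :=
          mul_nonneg hδ0.le (div_nonneg hW1nn hsqn.le)
        have h2 : 0 ≤ Real.sqrt (1+δ) * ‖bv‖ :=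
          mul_nonneg (Real.sqrt_nonneg _) hbvnn
        linarith
      · have hb2 : ‖b0‖^2 ≤ ‖b0‖*‖bv‖ + δ*L*(L + W1/Real.sqrt n) := by
          linarith [hexp, hE1, hsumE2]
        have hbv' : ‖b0‖*‖bv‖ ≤ Real.sqrt (1+δ)*L*‖bv‖ :=
          mul_le_mul_of_nonneg_right hupp hbvnn
        have hdist : δ*L*(L + W1/Real.sqrt n) = δ*L*L + δ*L*(W1/Real.sqrt n) := by ring
        have hkey : (1-δ)*L^2
            ≤ Real.sqrt (1+δ)*L*‖bv‖ + δ*L*L + δ*L*(W1/Real.sqrt n) := by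
          linarith [hlow, hb2, hbv', hdist]
        have expand : (δ * (W1 / Real.sqrt n) + Real.sqrt (1+δ) * ‖bv‖) * L
            = Real.sqrt (1+δ)*L*‖bv‖ + δ*L*(W1/Real.sqrt n) := by ring
        have hid : ((1-2*δ)*L)*L = (1-δ)*L^2 - δ*L*L := by ring
        have h9 : ((1-2*δ)*L)*L ≤ (δ * (W1 / Real.sqrt n) + Real.sqrt (1+δ) * ‖bv‖) * L := by
          linarith [hkey, expand, hid]
        exact le_of_mul_le_mul_right h9 hLpos
    -- reduction from S to Sk 0 and conclusion
    have hSle : lpNorm 2 (fun i => if i ∈ S then v i else 0) ≤ L := by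
      have hd := dom_sum_le (fun i => g i^2) (fun i => sq_nonneg _) S (Sk 0)
        (by rw [card0]; exact hS)
        (fun i hi j hj => pow_le_pow_left₀ (hg0 i) (hdomT i hi j hj) 2)
      have e : lpNorm 2 (fun i => if i ∈ S then v i else 0)
          = Real.sqrt (∑ i ∈ S, g i^2) := by
        rw [lpNorm_two_eq]
        exact hnrm S
      rw [e, hL, hnrm]
      exact Real.sqrt_le_sqrt hd
    have hWle : W1 ≤ ∑ i ∈ Finset.univ \ S, g i := by
      have hd := dom_sum_le g hg0 S (Sk 0) (by rw [card0]; exact hS) hdomT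
      have e1 := Finset.sum_sdiff (Finset.subset_univ S) (f := g)
      have e2 := Finset.sum_sdiff (Finset.subset_univ (Sk 0)) (f := g)
      rw [hW1def]
      linarith
    have hl1S : lpNorm 1 (fun i => if i ∈ S then 0 else v i)
        = ∑ i ∈ Finset.univ \ S, g i := by
      rw [lpNorm_one_eq]
      have hpt : ∀ i : Fin N, ‖if i ∈ S then (0:ℂ) else v i‖
          = if i ∈ S then (0:ℝ) else g i := by
        intro i; by_cases h : i ∈ S <;> simp [h, hg]
      rw [Finset.sum_congr rfl fun i _ => hpt i]
      have h2 : ∑ i ∈ S, (if i ∈ S then (0:ℝ) else g i) = 0 :=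
        Finset.sum_eq_zero fun i hi => if_pos hi
      have h3 : ∑ i ∈ Finset.univ \ S, (if i ∈ S then (0:ℝ) else g i)
          = ∑ i ∈ Finset.univ \ S, g i :=
        Finset.sum_congr rfl fun i hi => if_neg (Finset.mem_sdiff.mp hi).2
      have h4 := Finset.sum_sdiff (Finset.subset_univ S)
        (f := fun i => if i ∈ S then (0:ℝ) else g i)
      linarith
    have hrpow : ((n:ℝ)) ^ (-(1:ℝ)/2) = (Real.sqrt n)⁻¹ := by
      rw [show (-(1:ℝ)/2) = -(1/2) by ring, Real.rpow_neg (Nat.cast_nonneg n),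
        ← Real.sqrt_eq_rpow]
    clear_value g σ Sk P L W1 bv b0
    have final : lpNorm 2 (fun i => if i ∈ S then v i else 0)
        ≤ δ/(1-2*δ) * (n:ℝ)^(-(1:ℝ)/2) * lpNorm 1 (fun i => if i ∈ S then 0 else v i)
          + Real.sqrt (1+δ)/(1-2*δ) * lpNorm 2 (A.mulVec v) := by
      rw [hl1S, hrpow, lpNorm_two_eq (A.mulVec v), ← hbv]
      set WS := ∑ i ∈ Finset.univ \ S, g i with hWS
      have hfin : (1-2*δ) * lpNorm 2 (fun i => if i ∈ S then v i else 0)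
          ≤ δ * ((Real.sqrt n)⁻¹ * WS) + Real.sqrt (1+δ) * ‖bv‖ := by
        have h1 : (1-2*δ) * lpNorm 2 (fun i => if i ∈ S then v i else 0) ≤ (1-2*δ)*L :=
          mul_le_mul_of_nonneg_left hSle hc.le
        have h2 : δ * (W1/Real.sqrt n) ≤ δ * ((Real.sqrt n)⁻¹ * WS) := by
          rw [div_eq_inv_mul]
          exact mul_le_mul_of_nonneg_left
            (mul_le_mul_of_nonneg_left hWle (by positivity)) hδ0.le
        linarith [core]
      have hgoal : δ/(1-2*δ) * (Real.sqrt n)⁻¹ * WS + Real.sqrt (1+δ)/(1-2*δ) * ‖bv‖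
          = (δ * ((Real.sqrt n)⁻¹ * WS) + Real.sqrt (1+δ) * ‖bv‖) / (1-2*δ) := by
        ring
      rw [hgoal, le_div_iff₀ hc]
      linarith [hfin]
    convert final using 3
    all_goals
      first
        | (rename_i i; by_cases h : i ∈ S <;> simp [h])
        | (refine congrArg _ (funext fun i => ?_); by_cases h : i ∈ S <;> simp [h])
end

section
/- Let q ≥ p ≥ 1, let A ∈ ℂ^{m×N}, and suppose there exists Δ : ℂ^m → ℂ^N such that (A,Δ) is (q,p)–n–instance-optimal with constant C_N. Then every z ∈ ker(A) satisfies ‖z‖_{ℓ_q} ≤ C_N · n^{1/q−1/p} · σ_{2n}(z)_{ℓ_p}. -/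
open scoped BigOperators
open scoped Classical

/-- Best `n`-term approximation error of `v` in `ℓ_p`. -/
noncomputable def bestApprox {ι : Type*} [Fintype ι] (n : ℕ) (p : ℝ) (v : ι → ℂ) : ℝ :=
  sInf {t : ℝ | ∃ z : ι → ℂ, sparsity z ≤ n ∧ t = lpNorm p (v - z)}

/-- `(A, Δ)` is `(q,p)`–`n`–instance-optimal with constant `C`. -/
def InstOpt {m N : ℕ} (A : Matrix (Fin m) (Fin N) ℂ) (Δ : (Fin m → ℂ) → Fin N → ℂ)
    (q p : ℝ) (n : ℕ) (C : ℝ) : Prop :=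
  ∀ z : Fin N → ℂ,
    lpNorm q (z - Δ (A.mulVec z)) ≤ C * (n : ℝ) ^ (1 / q - 1 / p) * bestApprox n p z

lemma lpNorm_nonneg {ι : Type*} [Fintype ι] (p : ℝ) (v : ι → ℂ) : 0 ≤ lpNorm p v := by
  unfold lpNorm
  apply Real.rpow_nonneg
  exact Finset.sum_nonneg fun i _ => Real.rpow_nonneg (norm_nonneg _) _

lemma lpNorm_zero {ι : Type*} [Fintype ι] {p : ℝ} (hp : p ≠ 0) : lpNorm p (0 : ι → ℂ) = 0 := by
  unfold lpNorm
  rw [Finset.sum_eq_zero, Real.zero_rpow (one_div_ne_zero hp)]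
  intro i _
  simp [Real.zero_rpow hp]

lemma lpNorm_eq_zero {ι : Type*} [Fintype ι] {p : ℝ} (hp : 0 < p) {v : ι → ℂ}
    (h : lpNorm p v = 0) : v = 0 := by
  unfold lpNorm at h
  have hs : ∑ i, ‖v i‖ ^ p = 0 := by
    by_contra hne
    have h0 : 0 ≤ ∑ i, ‖v i‖ ^ p :=
      Finset.sum_nonneg fun i _ => Real.rpow_nonneg (norm_nonneg _) _
    exact hne ((Real.rpow_eq_zero h0 (one_div_ne_zero hp.ne')).mp h)
  funext i
  have := (Finset.sum_eq_zero_iff_of_nonneg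
    (fun i _ => Real.rpow_nonneg (norm_nonneg _) p)).mp hs i (Finset.mem_univ i)
  have : ‖v i‖ = 0 := (Real.rpow_eq_zero (norm_nonneg _) hp.ne').mp this
  simpa using this

lemma sparsity_le {ι : Type*} [Fintype ι] (v : ι → ℂ) (S : Finset ι)
    (h : ∀ i, v i ≠ 0 → i ∈ S) : sparsity v ≤ S.card :=
  Finset.card_le_card fun i hi => h i (Finset.mem_filter.mp hi).2

lemma bestApprox_nonneg {ι : Type*} [Fintype ι] (n : ℕ) (p : ℝ) (v : ι → ℂ) :
    0 ≤ bestApprox n p v := by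
  apply Real.sInf_nonneg
  rintro t ⟨y, -, rfl⟩
  exact lpNorm_nonneg _ _

lemma bestApprox_le {ι : Type*} [Fintype ι] {n : ℕ} (p : ℝ) (v y : ι → ℂ)
    (hy : sparsity y ≤ n) : bestApprox n p v ≤ lpNorm p (v - y) := by
  apply csInf_le
  · exact ⟨0, by rintro t ⟨w, -, rfl⟩; exact lpNorm_nonneg _ _⟩
  · exact ⟨y, hy, rfl⟩

lemma bestApprox_sparse {ι : Type*} [Fintype ι] {n : ℕ} {p : ℝ} (hp : p ≠ 0) (y : ι → ℂ)
    (hy : sparsity y ≤ n) : bestApprox n p y = 0 := by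
  have h1 : bestApprox n p y ≤ 0 := by
    have := bestApprox_le p y y hy
    simpa [lpNorm_zero hp] using this
  exact le_antisymm h1 (bestApprox_nonneg n p y)

/-- If `(A,Δ)` is `(q,p)`–`n`–instance-optimal with constant `C_N`, then every
`z ∈ ker A` satisfies `‖z‖_q ≤ C_N n^{1/q−1/p} σ_{2n}(z)_p`. -/
theorem stmt7 {m N : ℕ} (p q : ℝ) (hp : 1 ≤ p) (hpq : p ≤ q) (n : ℕ) (hn : 0 < n)
    (A : Matrix (Fin m) (Fin N) ℂ) (CN : ℝ)
    (h : ∃ Δ : (Fin m → ℂ) → Fin N → ℂ, InstOpt A Δ q p n CN) :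
    ∀ z : Fin N → ℂ, A.mulVec z = 0 →
      lpNorm q z ≤ CN * (n : ℝ) ^ (1 / q - 1 / p) * bestApprox (2 * n) p z := by
  obtain ⟨Δ, hΔ⟩ := h
  have hq : (1 : ℝ) ≤ q := hp.trans hpq
  have hq0 : (0 : ℝ) < q := lt_of_lt_of_le one_pos hq
  have hp0 : p ≠ 0 := ne_of_gt (lt_of_lt_of_le one_pos hp)
  set Cn : ℝ := CN * (n : ℝ) ^ (1 / q - 1 / p) with hCn
  intro z hz
  -- key step
  have key : ∀ y : Fin N → ℂ, sparsity y ≤ 2 * n →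
      ∃ b : ℝ, 0 ≤ b ∧ lpNorm q z ≤ Cn * b ∧ b ≤ lpNorm p (z - y) := by
    intro y hy
    set S : Finset (Fin N) := Finset.univ.filter fun i => y i ≠ 0 with hS
    have hScard : S.card ≤ 2 * n := hy
    obtain ⟨S1, hS1sub, hS1card⟩ :=
      Finset.exists_subset_card_eq (min_le_left S.card n)
    set y1 : Fin N → ℂ := fun i => if i ∈ S1 then y i else 0 with hy1
    have hy1sp : sparsity y1 ≤ n := by
      refine le_trans (sparsity_le y1 S1 ?_) ?_
      · intro i hi
        by_contra hmem
        exact hi (by simp [hy1, hmem])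
      · rw [hS1card]; exact min_le_right _ _
    have hy2sp : sparsity (y - y1) ≤ n := by
      refine le_trans (sparsity_le (y - y1) (S \ S1) ?_) ?_
      · intro i hi
        have hiS : i ∈ S := by
          by_contra hiS
          have h0 : y i = 0 := by
            by_contra hne; exact hiS (by simp [hS, hne])
          have h1 : y1 i = 0 := by
            by_cases hmem : i ∈ S1
            · simp [hy1, hmem, h0]
            · simp [hy1, hmem]
          exact hi (by simp [h0, h1])
        have hiS1 : i ∉ S1 := by
          intro hmem
          exact hi (by simp [hy1, hmem])
        exact Finset.mem_sdiff.mpr ⟨hiS, hiS1⟩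
      · rw [Finset.card_sdiff_of_subset hS1sub, hS1card]
        omega
    -- Δ recovers sparse vectors exactly
    have hΔ1 := hΔ (-y1)
    have hba : bestApprox n p (-y1) = 0 := by
      apply bestApprox_sparse hp0
      refine le_trans (sparsity_le _ (Finset.univ.filter fun i => y1 i ≠ 0) ?_) hy1sp
      intro i hi
      simp only [Finset.mem_filter, Finset.mem_univ, true_and]
      intro h0; exact hi (by simp [h0])
    rw [hba, mul_zero] at hΔ1
    have hrec : Δ (A.mulVec (-y1)) = -y1 := by
      have h0 : lpNorm q (-y1 - Δ (A.mulVec (-y1))) = 0 :=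
        le_antisymm hΔ1 (lpNorm_nonneg _ _)
      have := lpNorm_eq_zero hq0 h0
      have := sub_eq_zero.mp this
      exact this.symm
    -- apply instance optimality to w = z - y1
    have hAw : A.mulVec (z - y1) = A.mulVec (-y1) := by
      rw [Matrix.mulVec_sub, hz, Matrix.mulVec_neg, zero_sub]
    have hΔw := hΔ (z - y1)
    rw [hAw, hrec, sub_neg_eq_add, sub_add_cancel] at hΔw
    refine ⟨bestApprox n p (z - y1), bestApprox_nonneg _ _ _, hΔw, ?_⟩
    have := bestApprox_le p (z - y1) (y - y1) hy2sp
    simpa [sub_sub_sub_cancel_right] using this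
  have hsp0 : sparsity (0 : Fin N → ℂ) ≤ 2 * n := by
    simp [sparsity]
  rcases le_or_gt Cn 0 with hC | hC
  · -- Cn ≤ 0: z must be 0
    obtain ⟨b, hb0, h1, -⟩ := key 0 hsp0
    have hzq : lpNorm q z = 0 :=
      le_antisymm (h1.trans (mul_nonpos_of_nonpos_of_nonneg hC hb0)) (lpNorm_nonneg _ _)
    have hz0 : z = 0 := lpNorm_eq_zero hq0 hzq
    rw [hz0, lpNorm_zero (ne_of_gt hq0), bestApprox_sparse hp0 _ hsp0, mul_zero]
  · -- Cn > 0
    show lpNorm q z ≤ Cn * bestApprox (2 * n) p z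
    unfold bestApprox
    rw [← div_le_iff₀' hC]
    apply le_csInf
    · exact ⟨lpNorm p (z - 0), 0, hsp0, rfl⟩
    · rintro t ⟨y, hy, rfl⟩
      obtain ⟨b, hb0, h1, h2⟩ := key y hy
      rw [div_le_iff₀' hC]
      exact h1.trans (mul_le_mul_of_nonneg_left h2 hC.le)
end

section
/- Let n, N ∈ ℕ with n < N. Then there exists a family 𝒰 of subsets of {1,…,N} such that: (i) |S| = n for every S ∈ 𝒰; (ii) |S ∩ T| < n/2 for all distinct S, T ∈ 𝒰; and (iii) |𝒰| ≥ (N/(4n))^{n/2}. -/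
open Finset

lemma card_exact (n q : ℕ) (c : Fin n → Fin q) (J : Finset (Fin n)) :
    (Finset.univ.filter fun x : Fin n → Fin q => ∀ i, (x i = c i ↔ i ∈ J)).card
      = (q - 1) ^ (n - J.card) := by
  rw [← Fintype.card_subtype]
  rw [Fintype.card_congr (Equiv.subtypePiEquivPi (p := fun i v => v = c i ↔ i ∈ J))]
  rw [Fintype.card_pi]
  have key : ∀ i : Fin n, Fintype.card {v : Fin q // v = c i ↔ i ∈ J}
      = if i ∈ J then 1 else q - 1 := by
    intro i
    by_cases hi : i ∈ J
    · simp only [hi, if_true]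
      rw [Fintype.card_eq_one_iff]
      refine ⟨⟨c i, by simp [hi]⟩, fun y => Subtype.ext ?_⟩
      exact y.2.mpr trivial
    · simp only [hi, if_false]
      have e : {v : Fin q // v = c i ↔ False} ≃ {v : Fin q // ¬ v = c i} :=
        Equiv.subtypeEquivRight (by intro v; simp)
      rw [Fintype.card_congr e, Fintype.card_subtype_compl, Fintype.card_subtype_eq,
        Fintype.card_fin]
  rw [Finset.prod_congr rfl (fun i _ => key i)]
  have : ∀ i : Fin n, (if i ∈ J then 1 else q - 1) = (if i ∈ Jᶜ then q - 1 else 1) := by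
    intro i; by_cases hi : i ∈ J <;> simp [hi]
  rw [Finset.prod_congr rfl (fun i _ => this i), Finset.prod_ite_mem,
    Finset.univ_inter, Finset.prod_const, Finset.card_compl, Fintype.card_fin]

lemma exists_code (n q k : ℕ) (hq : 2 ≤ q) (hk : k ≤ n) :
    ∃ C : Finset (Fin n → Fin q),
      (∀ c ∈ C, ∀ c' ∈ C, c ≠ c' →
        ((Finset.univ.filter fun i => c i = c' i).card < k)) ∧
      q ^ n ≤ C.card * (2 ^ n * (q - 1) ^ (n - k)) := by
  classical
  set a : (Fin n → Fin q) → (Fin n → Fin q) → ℕ :=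
    fun c c' => (Finset.univ.filter fun i => c i = c' i).card with ha
  have asymm : ∀ c c', a c c' = a c' c := by
    intro c c'; simp only [ha]; congr 1; apply Finset.filter_congr; intro i _
    simp [eq_comm]
  -- maximal good family
  have hP : ∃ C ∈ (Finset.univ : Finset (Finset (Fin n → Fin q))).filter
      (fun F => ∀ c ∈ F, ∀ c' ∈ F, c ≠ c' → a c c' < k),
      ∀ F ∈ (Finset.univ : Finset (Finset (Fin n → Fin q))).filter
      (fun F => ∀ c ∈ F, ∀ c' ∈ F, c ≠ c' → a c c' < k), F.card ≤ C.card := by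
    apply Finset.exists_max_image
    exact ⟨∅, by simp⟩
  obtain ⟨C, hCmem, hCmax⟩ := hP
  have hCgood : ∀ c ∈ C, ∀ c' ∈ C, c ≠ c' → a c c' < k :=
    (Finset.mem_filter.mp hCmem).2
  refine ⟨C, hCgood, ?_⟩
  -- covering property
  have hcover : ∀ x : Fin n → Fin q, ∃ c ∈ C, k ≤ a x c := by
    intro x
    by_cases hx : x ∈ C
    · exact ⟨x, hx, by simp [ha, hk]⟩
    · by_contra hcon
      push_neg at hcon
      have hgood' : ∀ c ∈ insert x C, ∀ c' ∈ insert x C, c ≠ c' → a c c' < k := by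
        intro c hc0 c' hc0' hne
        rcases Finset.mem_insert.mp hc0 with rfl | hc1
        · rcases Finset.mem_insert.mp hc0' with rfl | hc1'
          · exact absurd rfl hne
          · exact hcon c' hc1'
        · rcases Finset.mem_insert.mp hc0' with rfl | hc1'
          · rw [asymm]; exact hcon c hc1
          · exact hCgood c hc1 c' hc1' hne
      have := hCmax (insert x C) (Finset.mem_filter.mpr ⟨Finset.mem_univ _, hgood'⟩)
      rw [Finset.card_insert_of_notMem hx] at this
      omega
  -- counting
  have hunion : (Finset.univ : Finset (Fin n → Fin q)) ⊆
      C.biUnion (fun c => Finset.univ.filter fun x => k ≤ a x c) := by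
    intro x _
    obtain ⟨c, hc, hac⟩ := hcover x
    exact Finset.mem_biUnion.mpr ⟨c, hc, Finset.mem_filter.mpr ⟨Finset.mem_univ _, hac⟩⟩
  have hball : ∀ c : Fin n → Fin q,
      (Finset.univ.filter fun x => k ≤ a x c).card ≤ 2 ^ n * (q - 1) ^ (n - k) := by
    intro c
    have hsub : (Finset.univ.filter fun x => k ≤ a x c) ⊆
        (Finset.univ.powerset.filter fun J : Finset (Fin n) => k ≤ J.card).biUnion
          (fun J => Finset.univ.filter fun x : Fin n → Fin q =>
            ∀ i, (x i = c i ↔ i ∈ J)) := by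
      intro x hx
      have hx' := (Finset.mem_filter.mp hx).2
      refine Finset.mem_biUnion.mpr ⟨Finset.univ.filter fun i => x i = c i,
        Finset.mem_filter.mpr ⟨Finset.mem_powerset.mpr (Finset.subset_univ _), hx'⟩, ?_⟩
      refine Finset.mem_filter.mpr ⟨Finset.mem_univ _, ?_⟩
      intro i; simp
    calc (Finset.univ.filter fun x => k ≤ a x c).card
        ≤ ∑ J ∈ (Finset.univ.powerset.filter fun J : Finset (Fin n) => k ≤ J.card),
            (Finset.univ.filter fun x : Fin n → Fin q =>
              ∀ i, (x i = c i ↔ i ∈ J)).card :=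
          le_trans (Finset.card_le_card hsub) (Finset.card_biUnion_le)
      _ ≤ ∑ J ∈ (Finset.univ.powerset.filter fun J : Finset (Fin n) => k ≤ J.card),
            (q - 1) ^ (n - k) := by
          apply Finset.sum_le_sum
          intro J hJ
          rw [card_exact]
          apply Nat.pow_le_pow_right (by omega)
          have := (Finset.mem_filter.mp hJ).2
          omega
      _ = (Finset.univ.powerset.filter fun J : Finset (Fin n) => k ≤ J.card).card
            * (q - 1) ^ (n - k) := by rw [Finset.sum_const, smul_eq_mul]
      _ ≤ 2 ^ n * (q - 1) ^ (n - k) := by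
          apply Nat.mul_le_mul_right
          calc (Finset.univ.powerset.filter fun J : Finset (Fin n) => k ≤ J.card).card
              ≤ (Finset.univ : Finset (Fin n)).powerset.card :=
                Finset.card_le_card (Finset.filter_subset _ _)
            _ = 2 ^ n := by rw [Finset.card_powerset, Finset.card_univ, Fintype.card_fin]
  calc q ^ n = (Finset.univ : Finset (Fin n → Fin q)).card := by
        rw [Finset.card_univ, Fintype.card_fun, Fintype.card_fin, Fintype.card_fin]
    _ ≤ (C.biUnion (fun c => Finset.univ.filter fun x => k ≤ a x c)).card :=
        Finset.card_le_card hunion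
    _ ≤ ∑ c ∈ C, (Finset.univ.filter fun x => k ≤ a x c).card := Finset.card_biUnion_le
    _ ≤ ∑ c ∈ C, 2 ^ n * (q - 1) ^ (n - k) := Finset.sum_le_sum (fun c _ => hball c)
    _ = C.card * (2 ^ n * (q - 1) ^ (n - k)) := by rw [Finset.sum_const, smul_eq_mul]

lemma numeric (n N q M : ℕ) (hn : 1 ≤ n) (hq : 4 ≤ q) (hqN : (N:ℝ) ≤ n * (q + 1))
    (hcount : ((q:ℝ)) ^ n ≤ (M:ℝ) * (2 ^ n * ((q:ℝ) - 1) ^ (n - (n+1)/2))) :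
    ((N : ℝ) / (4 * n)) ^ ((n : ℝ) / 2) ≤ (M:ℝ) := by
  set x : ℝ := (q : ℝ) with hxdef
  set m : ℕ := n - (n+1)/2 with hmdef
  have hx : (4:ℝ) ≤ x := by rw [hxdef]; exact_mod_cast hq
  have hx1 : (1:ℝ) ≤ x - 1 := by linarith
  have h2n : (0:ℝ) < 2 ^ n := by positivity
  have hmpos : (0:ℝ) < (x - 1) ^ m := by positivity
  have hmn : (m:ℝ) ≤ (n:ℝ) / 2 := by
    have : 2 * m ≤ n := by omega
    have := (Nat.cast_le (α := ℝ)).mpr this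
    push_cast at this; linarith
  have hnn : (0:ℝ) ≤ (n:ℝ) / 2 := by positivity
  have step1 : (N:ℝ) / (4 * n) ≤ (x + 1) / 4 := by
    rw [div_le_div_iff₀ (by positivity) (by norm_num)]
    have hn' : (1:ℝ) ≤ (n:ℝ) := by exact_mod_cast hn
    nlinarith
  have step2 : ((N:ℝ) / (4 * n)) ^ ((n:ℝ)/2) ≤ ((x + 1)/4) ^ ((n:ℝ)/2) :=
    Real.rpow_le_rpow (by positivity) step1 hnn
  have step3 : ((x + 1)/4) ^ ((n:ℝ)/2) = (x + 1) ^ ((n:ℝ)/2) / 2 ^ n := by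
    rw [Real.div_rpow (by linarith) (by norm_num)]
    congr 1
    rw [show (4:ℝ) = (2:ℝ) ^ (2:ℕ) by norm_num, ← Real.rpow_natCast (2:ℝ) 2,
      ← Real.rpow_mul (by norm_num), ← Real.rpow_natCast (2:ℝ) n]
    congr 1
    push_cast; ring
  have step4 : (x + 1) ^ ((n:ℝ)/2) * (x - 1) ^ m ≤ x ^ n := by
    have h2 : (x - 1) ^ m ≤ (x - 1) ^ ((n:ℝ)/2) := by
      rw [← Real.rpow_natCast (x - 1) m]
      exact Real.rpow_le_rpow_of_exponent_le hx1 hmn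
    calc (x + 1) ^ ((n:ℝ)/2) * (x - 1) ^ m
        ≤ (x + 1) ^ ((n:ℝ)/2) * (x - 1) ^ ((n:ℝ)/2) := by
          apply mul_le_mul_of_nonneg_left h2 (by positivity)
      _ = ((x + 1) * (x - 1)) ^ ((n:ℝ)/2) := (Real.mul_rpow (by linarith) (by linarith)).symm
      _ ≤ (x ^ (2:ℕ)) ^ ((n:ℝ)/2) := Real.rpow_le_rpow (by nlinarith) (by nlinarith) hnn
      _ = x ^ n := by
          rw [← Real.rpow_natCast x 2, ← Real.rpow_mul (by linarith), ← Real.rpow_natCast x n]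
          congr 1; push_cast; ring
  have step5 : (x + 1) ^ ((n:ℝ)/2) ≤ x ^ n / (x - 1) ^ m := by
    rw [le_div_iff₀ hmpos]; exact step4
  have step6 : x ^ n / (2 ^ n * (x - 1) ^ m) ≤ (M:ℝ) := by
    rw [div_le_iff₀ (by positivity)]; exact hcount
  calc ((N:ℝ) / (4 * n)) ^ ((n:ℝ)/2)
      ≤ ((x + 1)/4) ^ ((n:ℝ)/2) := step2
    _ = (x + 1) ^ ((n:ℝ)/2) / 2 ^ n := step3
    _ ≤ (x ^ n / (x - 1) ^ m) / 2 ^ n := by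
        gcongr
    _ = x ^ n / (2 ^ n * (x - 1) ^ m) := by ring
    _ ≤ (M:ℝ) := step6

/-- **A large packing of `n`-subsets with small pairwise intersections**
(Foucart–Pajor–Rauhut–Ullrich, Lem. 2.3).  For `n < N` there is a family `𝒰` of
`n`-element subsets of `{1,…,N}` with pairwise intersections of size `< n/2` and
`|𝒰| ≥ (N/(4n))^{n/2}`. -/
theorem stmt18 (n N : ℕ) (h : n < N) :
    ∃ 𝒰 : Finset (Finset (Fin N)),
      (∀ S ∈ 𝒰, S.card = n) ∧
      (∀ S ∈ 𝒰, ∀ T ∈ 𝒰, S ≠ T → ((S ∩ T).card : ℝ) < (n : ℝ) / 2) ∧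
      ((N : ℝ) / (4 * n)) ^ ((n : ℝ) / 2) ≤ (𝒰.card : ℝ) := by
  classical
  rcases Nat.eq_zero_or_pos n with rfl | hn
  · refine ⟨{∅}, by simp, ?_, ?_⟩
    · intro S hS T hT hne
      simp only [Finset.mem_singleton] at hS hT
      exact absurd (hS.trans hT.symm) hne
    · simp
  by_cases hN4 : N ≤ 4 * n
  · obtain ⟨S0, _, hcard⟩ := Finset.exists_subset_card_eq
      (show n ≤ (Finset.univ : Finset (Fin N)).card by simpa using h.le)
    refine ⟨{S0}, by simp [hcard], ?_, ?_⟩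
    · intro S hS T hT hne
      simp only [Finset.mem_singleton] at hS hT
      exact absurd (hS.trans hT.symm) hne
    · simp only [Finset.card_singleton, Nat.cast_one]
      apply Real.rpow_le_one (by positivity) _ (by positivity)
      rw [div_le_one (by positivity)]
      exact_mod_cast hN4
  · push_neg at hN4
    set q : ℕ := N / n with hqdef
    have hq4 : 4 ≤ q := (Nat.le_div_iff_mul_le hn).mpr (by omega)
    obtain ⟨C, hCgood, hCcount⟩ := exists_code n q ((n+1)/2) (by omega) (by omega)
    -- embedding of Fin n × Fin q into Fin N
    have hcardle : Fintype.card (Fin n × Fin q) ≤ Fintype.card (Fin N) := by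
      simp only [Fintype.card_prod, Fintype.card_fin]
      calc n * q = q * n := Nat.mul_comm _ _
        _ ≤ N := Nat.div_mul_le_self N n
    obtain ⟨e⟩ := Function.Embedding.nonempty_of_card_le hcardle
    set S : (Fin n → Fin q) → Finset (Fin N) :=
      fun c => Finset.univ.image (fun i => e (i, c i)) with hSdef
    have hinj : ∀ c : Fin n → Fin q, Function.Injective (fun i => e (i, c i)) := by
      intro c i j hij
      exact (Prod.mk.injEq _ _ _ _).mp (e.injective hij) |>.1
    have hpair : ∀ (c c' : Fin n → Fin q) (i j : Fin n),
        e (i, c i) = e (j, c' j) → i = j ∧ c i = c' i := by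
      intro c c' i j hij
      obtain ⟨h1, h2⟩ := (Prod.mk.injEq _ _ _ _).mp (e.injective hij)
      subst h1; exact ⟨rfl, h2⟩
    have hScard : ∀ c, (S c).card = n := by
      intro c
      rw [hSdef, Finset.card_image_of_injective _ (hinj c), Finset.card_univ, Fintype.card_fin]
    have hSint : ∀ c c', S c ∩ S c' =
        Finset.image (fun i => e (i, c i)) (Finset.univ.filter fun i => c i = c' i) := by
      intro c c'
      ext y
      simp only [Finset.mem_inter, hSdef, Finset.mem_image, Finset.mem_filter,
        Finset.mem_univ, true_and]
      constructor
      · rintro ⟨⟨i, hi⟩, j, hj⟩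
        obtain ⟨h1, h2⟩ := hpair c' c j i (hj.trans hi.symm)
        subst h1
        exact ⟨j, h2.symm, hi⟩
      · rintro ⟨i, hi, rfl⟩
        exact ⟨⟨i, rfl⟩, ⟨i, by rw [hi]⟩⟩
    have hSinj : Function.Injective S := by
      intro c c' hcc'
      funext i
      have : e (i, c i) ∈ S c' := by
        rw [← hcc', hSdef]
        exact Finset.mem_image_of_mem _ (Finset.mem_univ i)
      rw [hSdef] at this
      obtain ⟨j, _, hj⟩ := Finset.mem_image.mp this
      obtain ⟨h1, h2⟩ := hpair c' c j i hj
      subst h1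
      exact h2.symm
    refine ⟨C.image S, ?_, ?_, ?_⟩
    · intro T hT
      obtain ⟨c, _, rfl⟩ := Finset.mem_image.mp hT
      exact hScard c
    · intro T hT T' hT' hne
      obtain ⟨c, hc, rfl⟩ := Finset.mem_image.mp hT
      obtain ⟨c', hc', rfl⟩ := Finset.mem_image.mp hT'
      have hcc' : c ≠ c' := fun hh => hne (by rw [hh])
      have hlt := hCgood c hc c' hc' hcc'
      have : (S c ∩ S c').card = (Finset.univ.filter fun i => c i = c' i).card := by
        rw [hSint, Finset.card_image_of_injective _ (hinj c)]
      rw [this]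
      have h2 : 2 * (Finset.univ.filter fun i => c i = c' i).card < n := by omega
      have h3 := (Nat.cast_lt (α := ℝ)).mpr h2
      push_cast at h3
      linarith
    · rw [Finset.card_image_of_injective _ hSinj]
      apply numeric n N q C.card hn hq4
      · have hlt : N < n * (q + 1) := by
          have h2 : N % n < n := Nat.mod_lt N hn
          calc N = n * q + N % n := by rw [hqdef]; exact (Nat.div_add_mod N n).symm
            _ < n * q + n := Nat.add_lt_add_left h2 _
            _ = n * (q + 1) := by ring
        exact_mod_cast hlt.le
      · have := hCcount
        have hc2 := (Nat.cast_le (α := ℝ)).mpr hCcount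
        push_cast [Nat.cast_sub (show 1 ≤ q by omega)] at hc2
        exact hc2
end
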